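/- If f : ℝ → ℝˣ satisfies the 2-cocycle relation f(x-y)·f(y-z)·f(z-x) = 1 for all x, y, z and f(x) ≠ 1 for all x ≠ 0, then C(x) := (f(x)+1)/(f(x)-1) satisfies C(x-y)C(y-z) + C(y-z)C(z-x) + C(z-x)C(x-y) = -1 for all pairwise distinct x, y, z. -/

import Mathlib

/-- The Cayley transform of a multiplicative 2-cocycle solves the Rota–Baxter equation. -/
theorem cayley_rota_baxter (f : ℝ → ℝ)
    (hf0 : ∀ x, f x ≠ 0)
    (hf1 : ∀ x, x ≠ 0 → f x ≠ 1)
    (hcocycle : ∀ x y z : ℝ, x - y ≠ 0 → y - z ≠ 0 → z - x ≠ 0 →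
      f (x - y) * f (y - z) * f (z - x) = 1) :
    ∀ x y z : ℝ, x ≠ y → y ≠ z → z ≠ x →
      (fun t => (f t + 1) / (f t - 1)) (x - y) * (fun t => (f t + 1) / (f t - 1)) (y - z)
        + (fun t => (f t + 1) / (f t - 1)) (y - z) * (fun t => (f t + 1) / (f t - 1)) (z - x)
        + (fun t => (f t + 1) / (f t - 1)) (z - x) * (fun t => (f t + 1) / (f t - 1)) (x - y)
      = -1 := by
  intro x y z hxy hyz hzx
  simp only
  have h1 : x - y ≠ 0 := sub_ne_zero.mpr hxy
  have h2 : y - z ≠ 0 := sub_ne_zero.mpr hyz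
  have h3 : z - x ≠ 0 := sub_ne_zero.mpr hzx
  have hc := hcocycle x y z h1 h2 h3
  have a1 : f (x - y) - 1 ≠ 0 := sub_ne_zero.mpr (hf1 _ h1)
  have a2 : f (y - z) - 1 ≠ 0 := sub_ne_zero.mpr (hf1 _ h2)
  have a3 : f (z - x) - 1 ≠ 0 := sub_ne_zero.mpr (hf1 _ h3)
  set a := f (x - y)
  set b := f (y - z)
  set c := f (z - x)
  field_simp
  linear_combination 4 * hc
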